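/- For u(x) = |x|²/2 + c|x|^{2-n} (n ≥ 3), one has ∑_{j=1}^n u₁ · cof(D²u)_{1j} · x_j = x₁² - c·n(n-2)|x|^{-n}x₁² + O(|x|^{1-n}) as |x| → ∞, where u₁ = ∂u/∂x₁. -/

import Mathlib

open EuclideanSpace Metric

/-- Partial derivative in direction `i`. -/
noncomputable def pd {n : ℕ} (f : EuclideanSpace ℝ (Fin n) → ℝ) (i : Fin n)
    (x : EuclideanSpace ℝ (Fin n)) : ℝ :=
  fderiv ℝ f x (EuclideanSpace.single i 1)

/-- Second partial derivative `∂_i ∂_j f`. -/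
noncomputable def pd2 {n : ℕ} (f : EuclideanSpace ℝ (Fin n) → ℝ) (i j : Fin n)
    (x : EuclideanSpace ℝ (Fin n)) : ℝ :=
  pd (pd f j) i x

/-- Hessian matrix of `f` at `x`. -/
noncomputable def hess {n : ℕ} (f : EuclideanSpace ℝ (Fin n) → ℝ)
    (x : EuclideanSpace ℝ (Fin n)) : Matrix (Fin n) (Fin n) ℝ :=
  Matrix.of fun i j => pd2 f i j x

/-- The `(i,j)` cofactor of a matrix. -/
noncomputable def cof {n : ℕ} (M : Matrix (Fin n) (Fin n) ℝ) (i j : Fin n) : ℝ :=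
  M.adjugate j i

/-! ### Matrix lemmas -/

open Matrix

lemma vecMul_special {n : ℕ} (a b : ℝ) (v : Fin n → ℝ)
    (M : Matrix (Fin n) (Fin n) ℝ)
    (hM : M = Matrix.of fun i j => (if i = j then a else 0) + b * v i * v j) :
    v ᵥ* M = (a + b * (v ⬝ᵥ v)) • v := by
  subst hM
  ext j
  simp only [Matrix.vecMul, dotProduct, Matrix.of_apply, Pi.smul_apply, smul_eq_mul]
  rw [Finset.sum_congr rfl (fun i _ => mul_add (v i) _ _), Finset.sum_add_distrib]
  simp only [mul_ite, mul_zero, Finset.sum_ite_eq', Finset.mem_univ, if_true]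
  have h : ∑ x : Fin n, v x * (b * v x * v j) = (b * ∑ x : Fin n, v x * v x) * v j := by
    rw [Finset.mul_sum, Finset.sum_mul]; exact Finset.sum_congr rfl fun i _ => by ring
  rw [h]; ring

lemma det_special {n : ℕ} (hn : 1 ≤ n) (a b : ℝ) (ha : a ≠ 0) (v : Fin n → ℝ)
    (M : Matrix (Fin n) (Fin n) ℝ)
    (hM : M = Matrix.of fun i j => (if i = j then a else 0) + b * v i * v j) :
    M.det = a ^ (n - 1) * (a + b * (v ⬝ᵥ v)) := by
  have h2 : M = a • (1 + replicateCol Unit ((b/a) • v) * replicateRow Unit v) := by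
    subst hM; ext i j
    simp [Matrix.mul_apply, Matrix.one_apply, Matrix.replicateCol, Matrix.replicateRow]
    split_ifs <;> field_simp <;> ring
  rw [h2, Matrix.det_smul, Matrix.det_one_add_replicateCol_mul_replicateRow]
  have hvv : v ⬝ᵥ (b/a) • v = (b/a) * (v ⬝ᵥ v) := by
    simp [dotProduct, Finset.mul_sum]; exact Finset.sum_congr rfl fun i _ => by ring
  rw [hvv, Fintype.card_fin,
    show a ^ n = a ^ (n-1) * a from by rw [← pow_succ]; congr 1; omega]
  field_simp

lemma vecMul_adjugate_special {n : ℕ} (hn : 1 ≤ n) (a b : ℝ) (ha : a ≠ 0) (v : Fin n → ℝ)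
    (hs : a + b * (v ⬝ᵥ v) ≠ 0)
    (M : Matrix (Fin n) (Fin n) ℝ)
    (hM : M = Matrix.of fun i j => (if i = j then a else 0) + b * v i * v j) :
    v ᵥ* M.adjugate = (a ^ (n - 1)) • v := by
  have h1 : ((a + b * (v ⬝ᵥ v)) • v) ᵥ* M.adjugate = (a^(n-1) * (a + b*(v ⬝ᵥ v))) • v := by
    rw [← vecMul_special a b v M hM, Matrix.vecMul_vecMul, Matrix.mul_adjugate,
      det_special hn a b ha v M hM]
    ext j
    simp [Matrix.vecMul, dotProduct, Matrix.one_apply, mul_ite, Finset.sum_ite_eq',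
      mul_comm]
  have h3 : ((a + b * (v ⬝ᵥ v)) • v) ᵥ* M.adjugate
      = (a + b * (v ⬝ᵥ v)) • (v ᵥ* M.adjugate) := by
    ext j
    simp [Matrix.vecMul, dotProduct, Finset.mul_sum, mul_assoc]
  have key : (a + b * (v ⬝ᵥ v)) • (v ᵥ* M.adjugate)
      = (a + b * (v ⬝ᵥ v)) • ((a ^ (n - 1)) • v) := by
    rw [← h3, h1, smul_smul, mul_comm]
  exact smul_right_injective (Fin n → ℝ) hs key

/-! ### Calculus lemmas -/

lemma sq_rpow {n : ℕ} (y : EuclideanSpace ℝ (Fin n)) (t : ℝ) :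
    ((‖y‖ ^ 2 : ℝ)) ^ t = ‖y‖ ^ (2 * t) := by
  rw [← Real.rpow_natCast ‖y‖ 2, ← Real.rpow_mul (norm_nonneg y)]
  norm_num

lemma hasFDerivAt_sq_rpow {n : ℕ} (p : ℝ) {x : EuclideanSpace ℝ (Fin n)} (hx : x ≠ 0) :
    HasFDerivAt (fun y : EuclideanSpace ℝ (Fin n) => ((‖y‖ ^ 2 : ℝ)) ^ p)
      ((2 * p * ‖x‖ ^ (2 * (p - 1))) • (innerSL ℝ x)) x := by
  have hnx : ‖x‖ ≠ 0 := norm_ne_zero_iff.mpr hx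
  have h0 : (‖x‖ ^ 2 : ℝ) ≠ 0 := by positivity
  have hg : HasFDerivAt (fun y : EuclideanSpace ℝ (Fin n) => (‖y‖ ^ 2 : ℝ))
      (2 • (innerSL ℝ x)) x := (hasStrictFDerivAt_norm_sq x).hasFDerivAt
  have hd : HasDerivAt (fun t : ℝ => t ^ p) (p * (‖x‖ ^ 2 : ℝ) ^ (p - 1)) ((‖x‖ : ℝ) ^ 2) :=
    Real.hasDerivAt_rpow_const (Or.inl h0)
  have hc := hd.comp_hasFDerivAt x hg
  refine hc.congr_fderiv ?_
  ext w
  simp only [ContinuousLinearMap.coe_smul', Pi.smul_apply, smul_eq_mul, ← Nat.cast_smul_eq_nsmul ℝ]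
  rw [sq_rpow]
  ring

lemma u_hasFDerivAt {n : ℕ} (c : ℝ) {x : EuclideanSpace ℝ (Fin n)} (hx : x ≠ 0) :
    HasFDerivAt (fun y : EuclideanSpace ℝ (Fin n) => ‖y‖ ^ 2 / 2 + c * ‖y‖ ^ ((2 : ℝ) - n))
      ((1 + c * ((2:ℝ) - n) * ‖x‖ ^ (-(n:ℝ))) • (innerSL ℝ x)) x := by
  have hre : (fun y : EuclideanSpace ℝ (Fin n) => ‖y‖ ^ 2 / 2 + c * ‖y‖ ^ ((2 : ℝ) - n))
      = fun y : EuclideanSpace ℝ (Fin n) =>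
          (2⁻¹ : ℝ) * (‖y‖ ^ 2 : ℝ) + c * ((‖y‖ ^ 2 : ℝ)) ^ (((2:ℝ) - n)/2) := by
    funext y
    rw [sq_rpow, show (2:ℝ) * (((2:ℝ) - n)/2) = (2:ℝ) - n from by ring]
    ring
  rw [hre]
  have h1 := ((hasStrictFDerivAt_norm_sq x).hasFDerivAt).const_mul (2⁻¹ : ℝ)
  have h2 : HasFDerivAt
      (fun y : EuclideanSpace ℝ (Fin n) => c * ((‖y‖ ^ 2 : ℝ)) ^ (((2:ℝ) - n)/2))
      ((c * ((2:ℝ) - n) * ‖x‖ ^ (-(n:ℝ))) • (innerSL ℝ x)) x := by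
    have h := (hasFDerivAt_sq_rpow (((2:ℝ) - n)/2) hx).const_mul c
    rw [show (2:ℝ) * (((2:ℝ) - n)/2 - 1) = -(n:ℝ) from by ring,
      show (2:ℝ) * (((2:ℝ) - n)/2) = (2:ℝ) - n from by ring] at h
    refine h.congr_fderiv ?_
    rw [smul_smul]
    ring_nf
  have hsum := h1.add h2
  refine hsum.congr_fderiv ?_
  ext w
  simp only [ContinuousLinearMap.add_apply, ContinuousLinearMap.coe_smul', Pi.smul_apply,
    smul_eq_mul, ← Nat.cast_smul_eq_nsmul ℝ, Nat.cast_ofNat]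
  ring

lemma pd_u {n : ℕ} (c : ℝ) {x : EuclideanSpace ℝ (Fin n)} (hx : x ≠ 0) (i : Fin n) :
    pd (fun y => ‖y‖ ^ 2 / 2 + c * ‖y‖ ^ ((2 : ℝ) - n)) i x
      = (1 + c * ((2:ℝ) - n) * ‖x‖ ^ (-(n:ℝ))) * x i := by
  rw [pd, (u_hasFDerivAt c hx).fderiv]
  simp [EuclideanSpace.inner_single_right]

lemma pd_u_eventually {n : ℕ} (c : ℝ) {x : EuclideanSpace ℝ (Fin n)} (hx : x ≠ 0) (j : Fin n) :
    pd (fun y => ‖y‖ ^ 2 / 2 + c * ‖y‖ ^ ((2 : ℝ) - n)) j =ᶠ[nhds x]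
      fun y => (1 + c * ((2:ℝ) - n) * ((‖y‖ ^ 2 : ℝ)) ^ (-(n:ℝ)/2)) * y j := by
  filter_upwards [eventually_ne_nhds hx] with y hy
  rw [pd_u c hy j, sq_rpow, show (2:ℝ) * (-(n:ℝ)/2) = -(n:ℝ) from by ring]

lemma pd2_u {n : ℕ} (c : ℝ) {x : EuclideanSpace ℝ (Fin n)} (hx : x ≠ 0) (i j : Fin n) :
    pd2 (fun y => ‖y‖ ^ 2 / 2 + c * ‖y‖ ^ ((2 : ℝ) - n)) i j x
      = (if i = j then (1 + c * ((2:ℝ) - n) * ‖x‖ ^ (-(n:ℝ))) else 0)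
        + (c * n * ((n:ℝ) - 2) * ‖x‖ ^ (-(n:ℝ) - 2)) * x i * x j := by
  rw [pd2, pd, (pd_u_eventually c hx j).fderiv_eq]
  have hA : HasFDerivAt
      (fun y : EuclideanSpace ℝ (Fin n) =>
        1 + c * ((2:ℝ) - n) * ((‖y‖ ^ 2 : ℝ)) ^ (-(n:ℝ)/2))
      ((c * ((2:ℝ) - n) * (2 * (-(n:ℝ)/2) * ‖x‖ ^ (2 * (-(n:ℝ)/2 - 1)))) • innerSL ℝ x) x := by
    have h := ((hasFDerivAt_sq_rpow (-(n:ℝ)/2) hx).const_mul (c * ((2:ℝ) - n))).const_add 1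
    refine h.congr_fderiv ?_
    rw [smul_smul]
  have hproj : HasFDerivAt (fun y : EuclideanSpace ℝ (Fin n) => y j)
      (EuclideanSpace.proj j : EuclideanSpace ℝ (Fin n) →L[ℝ] ℝ) x := by
    have h := (EuclideanSpace.proj (𝕜 := ℝ) (ι := Fin n) j).hasFDerivAt (x := x)
    have he : ⇑(EuclideanSpace.proj (𝕜 := ℝ) (ι := Fin n) j)
        = fun y : EuclideanSpace ℝ (Fin n) => y j := by
      funext y; rfl
    rwa [he] at h
  have hm := hA.mul hproj
  rw [HasFDerivAt.fderiv (f := fun y : EuclideanSpace ℝ (Fin n) =>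
    (1 + c * ((2:ℝ) - n) * ((‖y‖ ^ 2 : ℝ)) ^ (-(n:ℝ)/2)) * y j) hm]
  simp only [ContinuousLinearMap.add_apply, ContinuousLinearMap.coe_smul', Pi.smul_apply,
    smul_eq_mul, PiLp.proj_apply, EuclideanSpace.single_apply,
    innerSL_apply_apply, EuclideanSpace.inner_single_right, RCLike.inner_apply, one_mul,
    conj_trivial]
  rw [sq_rpow, show (2:ℝ) * (-(n:ℝ)/2) = -(n:ℝ) from by ring,
    show (2:ℝ) * (-(n:ℝ)/2 - 1) = -(n:ℝ) - 2 from by ring]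
  by_cases h : i = j
  · subst h; simp; ring
  · simp [h, Ne.symm h]; ring

lemma abs_pow_one_add_sub (m : ℕ) {ε : ℝ} (h : |ε| ≤ 1) :
    |(1 + ε) ^ m - 1 - m * ε| ≤ 4 ^ m * ε ^ 2 := by
  induction m with
  | zero => simp; positivity
  | succ k ih =>
    have key : (1+ε)^(k+1) - 1 - ((k:ℝ)+1)*ε = (1+ε)*((1+ε)^k - 1 - k*ε) + k*ε^2 := by ring
    have h1 : |1+ε| ≤ 2 := by
      calc |1+ε| ≤ |(1:ℝ)| + |ε| := abs_add_le _ _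
      _ ≤ 2 := by rw [abs_one]; linarith
    have h2 : (k:ℝ) ≤ 4 ^ k := by
      calc (k:ℝ) ≤ 2 ^ k := by exact_mod_cast (Nat.lt_two_pow_self (n := k)).le
      _ ≤ 4 ^ k := by gcongr <;> norm_num
    have step : |(1+ε)^(k+1) - 1 - ((k:ℝ)+1)*ε| ≤ 2 * (4^k * ε^2) + k * ε^2 := by
      rw [key]
      calc |(1+ε)*((1+ε)^k - 1 - k*ε) + k*ε^2|
          ≤ |(1+ε)*((1+ε)^k - 1 - k*ε)| + |(k:ℝ)*ε^2| := abs_add_le _ _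
        _ ≤ 2 * (4^k * ε^2) + k * ε^2 := by
            rw [abs_mul, abs_mul, abs_of_nonneg (by positivity : (0:ℝ) ≤ ε^2),
              abs_of_nonneg (by positivity : (0:ℝ) ≤ (k:ℝ))]
            have := mul_le_mul h1 ih (abs_nonneg _) (by norm_num)
            linarith
    have : ((k+1 : ℕ) : ℝ) = (k:ℝ) + 1 := by push_cast; ring
    rw [this]
    calc |(1+ε)^(k+1) - 1 - ((k:ℝ)+1)*ε| ≤ 2 * (4^k * ε^2) + k * ε^2 := step
      _ ≤ 4^(k+1) * ε^2 := by
          have hc : (2*(4:ℝ)^k + k) * ε^2 ≤ (4*(4:ℝ)^k) * ε^2 :=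
            mul_le_mul_of_nonneg_right (by linarith) (sq_nonneg ε)
          have h4 : (4:ℝ)^(k+1) = 4*4^k := by ring
          nlinarith [hc]

set_option maxHeartbeats 1000000 in
/-- For `u(x) = |x|²/2 + c|x|^{2-n}`,
`∑_j u₁ · cof(D²u)_{1j} · x_j = x₁² - cn(n-2)|x|^{-n}x₁² + O(|x|^{1-n})`. -/
theorem flux_integrand_expansion {n : ℕ} (hn : 3 ≤ n) (c : ℝ) :
    ∃ C R : ℝ, 0 < C ∧ ∀ x : EuclideanSpace ℝ (Fin n), R ≤ ‖x‖ →
      |(∑ j : Fin n,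
          pd (fun y => ‖y‖ ^ 2 / 2 + c * ‖y‖ ^ ((2 : ℝ) - n)) (⟨0, by omega⟩ : Fin n) x *
          cof (hess (fun y => ‖y‖ ^ 2 / 2 + c * ‖y‖ ^ ((2 : ℝ) - n)) x)
            (⟨0, by omega⟩ : Fin n) j * x j) -
        ((x ⟨0, by omega⟩) ^ 2 - c * n * ((n : ℝ) - 2) * ‖x‖ ^ (-(n : ℝ)) * (x ⟨0, by omega⟩) ^ 2)|
      ≤ C * ‖x‖ ^ ((1 : ℝ) - n) := by
  have hn3 : (3:ℝ) ≤ (n:ℝ) := by exact_mod_cast hn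
  refine ⟨4^n * c^2 * (n:ℝ)^4 + 1, 1 + 4*(1+|c|)*(n:ℝ)^2, by positivity, ?_⟩
  intro x hr
  set i0 : Fin n := (⟨0, by omega⟩ : Fin n) with hi0
  have hR0 : (0:ℝ) < 1 + 4*(1+|c|)*(n:ℝ)^2 := by positivity
  have hr1 : (1:ℝ) ≤ ‖x‖ := le_trans (by nlinarith [abs_nonneg c]) hr
  have hr0 : (0:ℝ) < ‖x‖ := by linarith
  have hx : x ≠ 0 := by
    intro h; rw [h, norm_zero] at hr1; linarith
  set r := ‖x‖ with hrdef
  set w := r ^ (-(n:ℝ)) with hwdef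
  have hw0 : 0 < w := Real.rpow_pos_of_pos hr0 _
  -- w ≤ 1/R
  have hwR : w ≤ 1 / (1 + 4*(1+|c|)*(n:ℝ)^2) := by
    have h1 : w ≤ r ^ (-1:ℝ) :=
      Real.rpow_le_rpow_of_exponent_le hr1 (by linarith)
    have h2 : r ^ (-1:ℝ) = 1/r := by rw [Real.rpow_neg_one]; ring
    have h3 : 1/r ≤ 1 / (1 + 4*(1+|c|)*(n:ℝ)^2) :=
      one_div_le_one_div_of_le hR0 hr
    linarith
  have hkey : (1+|c|) * (n:ℝ)^2 * w ≤ 1/4 := by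
    have h4 : (1+|c|) * (n:ℝ)^2 * w ≤ (1+|c|) * (n:ℝ)^2 * (1 / (1 + 4*(1+|c|)*(n:ℝ)^2)) := by
      gcongr
    have h5 : (1+|c|) * (n:ℝ)^2 * (1 / (1 + 4*(1+|c|)*(n:ℝ)^2)) ≤ 1/4 := by
      rw [mul_one_div, div_le_iff₀ hR0]
      nlinarith [abs_nonneg c]
    linarith
  -- the small quantity ε
  set ε := c * ((2:ℝ) - n) * w with hεdef
  have hεb : |ε| ≤ (1+|c|) * (n:ℝ)^2 * w := by
    rw [hεdef, abs_mul, abs_mul, abs_of_pos hw0]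
    have h6 : |(2:ℝ) - (n:ℝ)| ≤ (n:ℝ)^2 := by
      rw [abs_of_nonpos (by linarith)]
      nlinarith
    have h7 : |c| ≤ 1 + |c| := by linarith [abs_nonneg c]
    have := mul_le_mul (mul_le_mul h7 h6 (abs_nonneg _) (by positivity)) (le_refl w)
      (le_of_lt hw0) (by positivity)
    linarith
  have hε4 : |ε| ≤ 1/4 := le_trans hεb hkey
  set a := 1 + ε with hadef
  have ha0 : a ≠ 0 := by
    have := abs_le.mp hε4
    rw [hadef]; intro h; linarith [this.1]
  -- b and s
  set b := c * (n:ℝ) * ((n:ℝ) - 2) * r ^ (-(n:ℝ) - 2) with hbdef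
  set v : Fin n → ℝ := fun i => x i with hvdef
  have hvv : v ⬝ᵥ v = r^2 := by
    rw [hrdef, EuclideanSpace.norm_eq, Real.sq_sqrt (by positivity)]
    simp [dotProduct, hvdef, sq, Real.norm_eq_abs, abs_mul_abs_self]
  have hbr : b * r^2 = c * (n:ℝ) * ((n:ℝ) - 2) * w := by
    rw [hbdef, hwdef]
    have : r ^ (-(n:ℝ) - 2) * r^2 = r ^ (-(n:ℝ)) := by
      rw [← Real.rpow_natCast r 2, ← Real.rpow_add hr0]
      norm_num
    calc c * (n:ℝ) * ((n:ℝ) - 2) * r ^ (-(n:ℝ) - 2) * r ^ 2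
        = c * (n:ℝ) * ((n:ℝ) - 2) * (r ^ (-(n:ℝ) - 2) * r^2) := by ring
      _ = _ := by rw [this]
  have hs0 : a + b * (v ⬝ᵥ v) ≠ 0 := by
    rw [hvv, hbr, hadef, hεdef]
    have habs : |c * (n:ℝ) * ((n:ℝ)-2) * w + c * ((2:ℝ) - n) * w| ≤ (1+|c|) * (n:ℝ)^2 * w := by
      have he : c * (n:ℝ) * ((n:ℝ)-2) * w + c * ((2:ℝ) - n) * w
          = c * (((n:ℝ)-1) * ((n:ℝ)-2)) * w := by ring
      rw [he, abs_mul, abs_mul, abs_of_pos hw0]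
      have h6 : |((n:ℝ)-1) * ((n:ℝ)-2)| ≤ (n:ℝ)^2 := by
        rw [abs_of_nonneg (by nlinarith)]
        nlinarith
      have h7 : |c| ≤ 1 + |c| := by linarith [abs_nonneg c]
      have := mul_le_mul (mul_le_mul h7 h6 (abs_nonneg _) (by positivity)) (le_refl w)
        (le_of_lt hw0) (by positivity)
      linarith
    have := abs_le.mp (le_trans habs hkey)
    intro h
    linarith [this.1]
  -- the Hessian
  have hess_eq : hess (fun y => ‖y‖ ^ 2 / 2 + c * ‖y‖ ^ ((2 : ℝ) - n)) x
      = Matrix.of fun i j => (if i = j then a else 0) + b * v i * v j := by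
    ext i j
    rw [hess]
    simp only [Matrix.of_apply]
    rw [pd2_u c hx i j]
  have hadj : v ᵥ* (hess (fun y => ‖y‖ ^ 2 / 2 + c * ‖y‖ ^ ((2 : ℝ) - n)) x).adjugate
      = (a ^ (n - 1)) • v :=
    vecMul_adjugate_special (by omega) a b ha0 v hs0 _ hess_eq
  -- the sum
  have hsum : (∑ j : Fin n,
      pd (fun y => ‖y‖ ^ 2 / 2 + c * ‖y‖ ^ ((2 : ℝ) - n)) i0 x *
      cof (hess (fun y => ‖y‖ ^ 2 / 2 + c * ‖y‖ ^ ((2 : ℝ) - n)) x) i0 j * x j)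
      = a ^ n * (x i0)^2 := by
    have h1 : ∀ j : Fin n,
        pd (fun y => ‖y‖ ^ 2 / 2 + c * ‖y‖ ^ ((2 : ℝ) - n)) i0 x *
        cof (hess (fun y => ‖y‖ ^ 2 / 2 + c * ‖y‖ ^ ((2 : ℝ) - n)) x) i0 j * x j
        = pd (fun y => ‖y‖ ^ 2 / 2 + c * ‖y‖ ^ ((2 : ℝ) - n)) i0 x *
          (v j * (hess (fun y => ‖y‖ ^ 2 / 2 + c * ‖y‖ ^ ((2 : ℝ) - n)) x).adjugate j i0) := by
      intro j; rw [cof, hvdef]; ring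
    rw [Finset.sum_congr rfl (fun j _ => h1 j), ← Finset.mul_sum]
    have h2 : (∑ j : Fin n, v j *
        (hess (fun y => ‖y‖ ^ 2 / 2 + c * ‖y‖ ^ ((2 : ℝ) - n)) x).adjugate j i0)
        = (v ᵥ* (hess (fun y => ‖y‖ ^ 2 / 2 + c * ‖y‖ ^ ((2 : ℝ) - n)) x).adjugate) i0 := by
      simp [Matrix.vecMul, dotProduct]
    rw [h2, hadj, pd_u c hx i0]
    simp only [Pi.smul_apply, smul_eq_mul]
    rw [show a ^ n = a * a^(n-1) from by rw [← pow_succ']; congr 1; omega]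
    rw [hadef, hεdef, hwdef, hvdef]
    ring
  rw [hsum]
  -- rewrite the target
  have htar : a ^ n * (x i0)^2 -
      ((x i0) ^ 2 - c * n * ((n : ℝ) - 2) * r ^ (-(n : ℝ)) * (x i0) ^ 2)
      = (x i0)^2 * ((1+ε)^n - 1 - n*ε) := by
    rw [hadef, hεdef, hwdef]
    ring
  rw [htar, abs_mul, abs_of_nonneg (sq_nonneg (x i0))]
  -- bounds
  have hb1 : |(1+ε)^n - 1 - n*ε| ≤ 4^n * ε^2 :=
    abs_pow_one_add_sub n (le_trans hε4 (by norm_num))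
  have ht : (x i0)^2 ≤ r^2 := by
    rw [hrdef, EuclideanSpace.norm_eq, Real.sq_sqrt (by positivity)]
    have : (x i0)^2 ≤ ∑ i : Fin n, ‖x i‖^2 := by
      have := Finset.single_le_sum (f := fun i : Fin n => ‖x i‖^2)
        (fun i _ => by positivity) (Finset.mem_univ i0)
      simpa [Real.norm_eq_abs, sq_abs] using this
    exact this
  have hε2 : ε^2 ≤ c^2 * (n:ℝ)^4 * w^2 := by
    have h8 : |ε| ≤ |c| * (n:ℝ)^2 * w := by
      rw [hεdef, abs_mul, abs_mul, abs_of_pos hw0]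
      have h6 : |(2:ℝ) - (n:ℝ)| ≤ (n:ℝ)^2 := by
        rw [abs_of_nonpos (by linarith)]; nlinarith
      have := mul_le_mul (mul_le_mul (le_refl |c|) h6 (abs_nonneg _) (abs_nonneg c))
        (le_refl w) (le_of_lt hw0) (by positivity)
      linarith
    calc ε^2 = |ε|^2 := (sq_abs ε).symm
      _ ≤ (|c| * (n:ℝ)^2 * w)^2 := pow_le_pow_left₀ (abs_nonneg ε) h8 2
      _ = c^2 * (n:ℝ)^4 * w^2 := by rw [mul_pow, mul_pow, sq_abs]; ring
  have hrw : r^2 * w^2 ≤ r ^ ((1:ℝ) - n) := by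
    have he1 : r^2 * w^2 = r ^ ((2:ℝ) - 2*n) := by
      rw [hwdef, ← Real.rpow_natCast r 2, sq, ← Real.rpow_add hr0, ← Real.rpow_add hr0]
      norm_num
      ring_nf
    rw [he1]
    exact Real.rpow_le_rpow_of_exponent_le hr1 (by linarith)
  have hfin : (x i0)^2 * |(1+ε)^n - 1 - n*ε| ≤ (4^n * c^2 * (n:ℝ)^4) * (r^2 * w^2) := by
    calc (x i0)^2 * |(1+ε)^n - 1 - n*ε| ≤ r^2 * (4^n * ε^2) := by
          apply mul_le_mul ht hb1 (abs_nonneg _) (by positivity)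
      _ ≤ r^2 * (4^n * (c^2 * (n:ℝ)^4 * w^2)) := by gcongr
      _ = (4^n * c^2 * (n:ℝ)^4) * (r^2 * w^2) := by ring
  calc (x i0)^2 * |(1+ε)^n - 1 - n*ε| ≤ (4^n * c^2 * (n:ℝ)^4) * (r^2 * w^2) := hfin
    _ ≤ (4^n * c^2 * (n:ℝ)^4) * (r ^ ((1:ℝ) - n)) :=
        mul_le_mul_of_nonneg_left hrw (by positivity)
    _ ≤ (4^n * c^2 * (n:ℝ)^4 + 1) * (r ^ ((1:ℝ) - n)) := by
        have : (0:ℝ) < r ^ ((1:ℝ) - n) := Real.rpow_pos_of_pos hr0 _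
        nlinarith
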